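/- For every pair of integers x ≥ 0, y ≥ 0 there exist rational numbers a and b such that 𝒢(x,y) = a + b·(√3/π); in particular every value 𝒢(x,y) lies in the field ℚ(√3, π). -/

import Mathlib

open intervalIntegral Real Complex

open MeasureTheory

/-- `u(t) = (−1 + i√(4t−1))/(2t)`. -/
noncomputable def uu (t : ℝ) : ℂ :=
  (-1 + Complex.I * (Real.sqrt (4 * t - 1) : ℝ)) / (2 * t)

/-- The renormalized Green's function of the triangular-lattice walk:
`𝒢(x,y) = (3/π) ∫_{1/4}^{1} (4t−1)^{−1/2} ( t^y Σ_{j=1}^{x} C(x,j)(1−t)^{j−1} Re(u(t)^j)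
  − Σ_{ℓ=0}^{y−1} t^ℓ ) dt`. -/
noncomputable def calG (x y : ℕ) : ℝ :=
  (3 / Real.pi) * ∫ t in (1/4 : ℝ)..1,
    (1 / Real.sqrt (4 * t - 1)) *
      (t ^ y * ∑ j ∈ Finset.Icc 1 x, (x.choose j : ℝ) * (1 - t) ^ (j - 1) * ((uu t) ^ j).re
        - ∑ l ∈ Finset.range y, t ^ l)


lemma one_div_sqrt_eq (y : ℝ) : 1 / Real.sqrt y = y ^ (-(1/2) : ℝ) := by
  rcases lt_trichotomy y 0 with h | h | h
  · rw [Real.sqrt_eq_zero_of_nonpos h.le, Real.rpow_def_of_neg h]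
    rw [show (-(1/2):ℝ) * Real.pi = -(Real.pi/2) by ring, Real.cos_neg, Real.cos_pi_div_two]
    simp
  · simp [h]
  · rw [Real.rpow_neg h.le, Real.sqrt_eq_rpow, one_div]

lemma sqrt_integrable :
    IntervalIntegrable (fun t : ℝ => 1 / Real.sqrt (4 * t - 1)) MeasureTheory.volume (1/4) 1 := by
  have h0 : IntervalIntegrable (fun x : ℝ => x ^ (-(1/2) : ℝ)) MeasureTheory.volume 0 3 :=
    intervalIntegral.intervalIntegrable_rpow' (by norm_num)
  have h1 := (h0.comp_sub_right 1).comp_mul_left (c := 4) enorm_ne_top enorm_ne_top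
  have : IntervalIntegrable (fun t : ℝ => (4 * t - 1) ^ (-(1/2) : ℝ))
      MeasureTheory.volume ((0+1)/4) ((3+1)/4) := h1
  norm_num at this
  simpa only [one_div_sqrt_eq] using this

lemma zpow_cont (k : ℤ) : ContinuousOn (fun t : ℝ => t ^ k) (Set.uIcc (1/4 : ℝ) 1) := by
  apply ContinuousOn.zpow₀ continuousOn_id
  intro x hx
  left
  rw [Set.uIcc_of_le (by norm_num : (1/4:ℝ) ≤ 1)] at hx
  exact ne_of_gt (lt_of_lt_of_le (by norm_num) hx.1)

lemma intInt (k : ℤ) :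
    IntervalIntegrable (fun t : ℝ => t ^ k / Real.sqrt (4 * t - 1))
      MeasureTheory.volume (1/4) 1 := by
  have := sqrt_integrable.continuousOn_mul (zpow_cont k)
  simpa [div_eq_mul_inv, mul_comm, mul_assoc] using this

noncomputable def II (k : ℤ) : ℝ := ∫ t in (1/4 : ℝ)..1, t ^ k / Real.sqrt (4 * t - 1)


lemma sqrt_hasDeriv {t : ℝ} (ht : 4 * t - 1 > 0) :
    HasDerivAt (fun s : ℝ => Real.sqrt (4 * s - 1)) (2 / Real.sqrt (4 * t - 1)) t := by
  have h1 : HasDerivAt (fun s : ℝ => 4 * s - 1) 4 t := by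
    simpa using ((hasDerivAt_id t).const_mul 4).sub_const 1
  have h2 := (Real.hasDerivAt_sqrt (ne_of_gt ht)).comp t h1
  refine h2.congr_deriv (Eq.symm ?_)
  field_simp
  ring

lemma II_recur (k : ℤ) : (4 * k + 2 : ℝ) * II k - (k : ℝ) * II (k - 1) = Real.sqrt 3 := by
  set f' : ℝ → ℝ := fun t => (4 * k + 2 : ℝ) * (t ^ k / Real.sqrt (4 * t - 1))
      - (k : ℝ) * (t ^ (k - 1) / Real.sqrt (4 * t - 1)) with hf'
  have hint : IntervalIntegrable f' volume (1/4) 1 :=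
    (((intInt k).const_mul _)).sub ((intInt (k-1)).const_mul _)
  have hcont : ContinuousOn (fun t : ℝ => t ^ k * Real.sqrt (4 * t - 1))
      (Set.Icc (1/4 : ℝ) 1) := by
    apply ContinuousOn.mul
    · apply ContinuousOn.zpow₀ continuousOn_id
      intro x hx; left; exact ne_of_gt (lt_of_lt_of_le (by norm_num) hx.1)
    · exact Real.continuous_sqrt.comp_continuousOn (by fun_prop)
  have hderiv : ∀ t ∈ Set.Ioo (1/4 : ℝ) 1,
      HasDerivAt (fun s : ℝ => s ^ k * Real.sqrt (4 * s - 1)) (f' t) t := by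
    intro t ht
    have ht0 : (0:ℝ) < t := lt_trans (by norm_num) ht.1
    have ht4 : 4 * t - 1 > 0 := by linarith [ht.1]
    have hs : Real.sqrt (4 * t - 1) > 0 := Real.sqrt_pos.mpr ht4
    have hzp : HasDerivAt (fun s : ℝ => s ^ k) ((k : ℝ) * t ^ (k - 1)) t :=
      hasDerivAt_zpow k t (Or.inl (ne_of_gt ht0))
    have h := hzp.mul (sqrt_hasDeriv ht4)
    refine h.congr_deriv (Eq.symm ?_)
    have hs2 : Real.sqrt (4 * t - 1) * Real.sqrt (4 * t - 1) = 4 * t - 1 :=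
      Real.mul_self_sqrt ht4.le
    have htk : t ^ k = t ^ (k - 1) * t := by
      rw [← zpow_add_one₀ (ne_of_gt ht0)]; ring_nf
    rw [hf']
    have hsq : Real.sqrt (4 * t - 1) ^ 2 = 4 * t - 1 := Real.sq_sqrt ht4.le
    field_simp
    rw [htk]
    linear_combination (-(↑k * t ^ (k - 1))) * hsq
  have key := intervalIntegral.integral_eq_sub_of_hasDeriv_right_of_le
    (by norm_num : (1/4:ℝ) ≤ 1) hcont
    (fun t ht => (hderiv t ht).hasDerivWithinAt) hint
  have h14 : Real.sqrt (4 * (1/4 : ℝ) - 1) = 0 := by norm_num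
  rw [h14] at key
  have key2 : (∫ t in (1/4 : ℝ)..1, f' t) = Real.sqrt 3 := by
    rw [key]; norm_num
  rw [← key2, hf']
  rw [intervalIntegral.integral_sub ((intInt k).const_mul _) ((intInt (k-1)).const_mul _),
    intervalIntegral.integral_const_mul, intervalIntegral.integral_const_mul]
  rfl

lemma II_neg_one : II (-1) = 2 * Real.pi / 3 := by
  have hcont : ContinuousOn (fun t : ℝ => 2 * Real.arctan (Real.sqrt (4 * t - 1)))
      (Set.Icc (1/4 : ℝ) 1) := by
    apply Continuous.continuousOn
    exact continuous_const.mul (Real.continuous_arctan.comp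
      (Real.continuous_sqrt.comp (by continuity)))
  have hderiv : ∀ t ∈ Set.Ioo (1/4 : ℝ) 1,
      HasDerivAt (fun s : ℝ => 2 * Real.arctan (Real.sqrt (4 * s - 1)))
        (t ^ (-1 : ℤ) / Real.sqrt (4 * t - 1)) t := by
    intro t ht
    have ht0 : (0:ℝ) < t := lt_trans (by norm_num) ht.1
    have ht4 : 4 * t - 1 > 0 := by linarith [ht.1]
    have hs : Real.sqrt (4 * t - 1) > 0 := Real.sqrt_pos.mpr ht4
    have hsq : Real.sqrt (4 * t - 1) ^ 2 = 4 * t - 1 := Real.sq_sqrt ht4.le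
    have h := (((Real.hasDerivAt_arctan (Real.sqrt (4 * t - 1))).comp t
      (sqrt_hasDeriv ht4)).const_mul 2)
    refine h.congr_deriv (Eq.symm ?_)
    rw [hsq, zpow_neg_one]
    field_simp
    ring
  have key := intervalIntegral.integral_eq_sub_of_hasDeriv_right_of_le
    (by norm_num : (1/4:ℝ) ≤ 1) hcont
    (fun t ht => (hderiv t ht).hasDerivWithinAt) (intInt (-1))
  have h14 : Real.sqrt (4 * (1/4 : ℝ) - 1) = 0 := by norm_num
  have h1 : Real.sqrt (4 * (1 : ℝ) - 1) = Real.sqrt 3 := by norm_num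
  rw [h14, h1, Real.arctan_zero] at key
  have harc : Real.arctan (Real.sqrt 3) = Real.pi / 3 := by
    rw [← Real.tan_pi_div_three, Real.arctan_tan]
    · linarith [Real.pi_pos]
    · linarith [Real.pi_pos]
  rw [harc] at key
  rw [II, key]
  ring

lemma II_nat_mem (n : ℕ) : ∃ q r : ℚ, II n = q * Real.pi + r * Real.sqrt 3 := by
  induction n with
  | zero =>
    refine ⟨0, 1/2, ?_⟩
    have h := II_recur 0
    push_cast at h ⊢
    norm_num at h ⊢
    linarith
  | succ n ih =>
    obtain ⟨q, r, h⟩ := ih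
    refine ⟨((n:ℚ)+1)*q/(4*n+6), (((n:ℚ)+1)*r+1)/(4*n+6), ?_⟩
    rw [show (((n+1:ℕ)):ℤ) = (n:ℤ)+1 by omega]
    have hrec := II_recur ((n:ℤ)+1)
    rw [show ((n:ℤ)+1-1) = (n:ℤ) by ring,
      show ((((n:ℤ)+1) : ℤ) : ℝ) = (n:ℝ)+1 by push_cast; ring] at hrec
    have hc : ((4:ℝ)*n+6) ≠ 0 := by positivity
    rw [h] at hrec
    push_cast
    field_simp
    linear_combination hrec

lemma II_negnat_mem (n : ℕ) : ∃ q r : ℚ, II (-((n:ℤ)+1)) = q * Real.pi + r * Real.sqrt 3 := by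
  induction n with
  | zero =>
    refine ⟨2/3, 0, ?_⟩
    rw [show (-(((0:ℕ):ℤ)+1)) = -1 by omega, II_neg_one]
    push_cast
    ring
  | succ n ih =>
    obtain ⟨q, r, h⟩ := ih
    refine ⟨(4*(n:ℚ)+2)*q/((n:ℚ)+1), ((4*(n:ℚ)+2)*r+1)/((n:ℚ)+1), ?_⟩
    rw [show (-((((n+1:ℕ)):ℤ)+1)) = -((n:ℤ)+1)-1 by omega]
    set B := II (-((n:ℤ)+1)-1) with hB
    have hrec := II_recur (-((n:ℤ)+1))
    rw [← hB] at hrec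
    rw [show (((-((n:ℤ)+1)) : ℤ) : ℝ) = -((n:ℝ)+1) by push_cast; ring] at hrec
    have hc : ((n:ℝ)+1) ≠ 0 := by positivity
    rw [h] at hrec
    push_cast
    field_simp
    linear_combination hrec

lemma II_mem (k : ℤ) : ∃ q r : ℚ, II k = q * Real.pi + r * Real.sqrt 3 := by
  rcases k with n | n
  · exact II_nat_mem n
  · rw [show (Int.negSucc n) = -((n:ℤ)+1) from Int.negSucc_eq n]
    exact II_negnat_mem n

noncomputable def rp : ℕ → Polynomial ℚ
  | 0 => 1
  | 1 => Polynomial.C (-(1/2))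
  | (n+2) => -(rp (n+1) + Polynomial.X * rp n)

noncomputable def vv (t : ℝ) : ℂ :=
  (-1 + Complex.I * (Real.sqrt (4 * t - 1) : ℝ)) / 2

lemma vv_sq (t : ℝ) (ht : 0 ≤ 4 * t - 1) : (vv t) ^ 2 = -(vv t + t) := by
  have hs : ((Real.sqrt (4 * t - 1) : ℝ) : ℂ) ^ 2 = ((4 * t - 1 : ℝ) : ℂ) := by
    rw [← Complex.ofReal_pow, Real.sq_sqrt ht]
  have hI : (Complex.I) ^ 2 = -1 := Complex.I_sq
  rw [vv]
  push_cast at hs ⊢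
  linear_combination ((((Real.sqrt (4 * t - 1) : ℝ) : ℂ))^2/4) * hI - (1/4 : ℂ) * hs

lemma vv_pow_re (t : ℝ) (ht : 0 ≤ 4 * t - 1) (j : ℕ) :
    ((vv t) ^ j).re = (Polynomial.aeval t (rp j) : ℝ) := by
  induction j using Nat.strong_induction_on with
  | _ j ih =>
    match j with
    | 0 => simp [rp]
    | 1 =>
      simp only [pow_one, rp, Polynomial.aeval_C]
      rw [vv]
      have : ((-1 + Complex.I * (Real.sqrt (4*t-1) : ℝ)) / 2).re
          = (-1 + Complex.I * (Real.sqrt (4*t-1) : ℝ)).re / 2 := by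
        rw [Complex.div_re]
        simp [Complex.normSq]
        ring
      rw [this]
      simp
      norm_num
    | (j+2) =>
      have h1 : (vv t) ^ (j+2) = -((vv t)^(j+1) + (t:ℂ) * (vv t)^j) := by
        have : (vv t) ^ (j+2) = (vv t)^j * (vv t)^2 := by ring
        rw [this, vv_sq t ht]
        ring
      rw [h1]
      have h2 : rp (j+2) = -(rp (j+1) + Polynomial.X * rp j) := rfl
      rw [h2]
      simp only [Complex.neg_re, Complex.add_re, Complex.re_ofReal_mul, map_neg, map_add,
        map_mul, Polynomial.aeval_X]
      rw [ih (j+1) (by omega), ih j (by omega)]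

lemma uu_pow_re (t : ℝ) (ht0 : t ≠ 0) (ht : 0 ≤ 4 * t - 1) (j : ℕ) :
    ((uu t) ^ j).re = (Polynomial.aeval t (rp j) : ℝ) / t ^ j := by
  have hv : vv t = (t : ℂ) * uu t := by
    rw [vv, uu]
    have : ((t:ℝ):ℂ) ≠ 0 := Complex.ofReal_ne_zero.mpr ht0
    field_simp
  have h1 : ((vv t) ^ j).re = t ^ j * ((uu t) ^ j).re := by
    rw [hv, mul_pow, ← Complex.ofReal_pow, Complex.re_ofReal_mul]
  have h2 := vv_pow_re t ht j
  rw [h1] at h2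
  field_simp [pow_ne_zero j ht0] at h2 ⊢
  linarith [h2]

def Nice (f : ℝ → ℝ) : Prop :=
  IntervalIntegrable f MeasureTheory.volume (1/4) 1 ∧
  ∃ q r : ℚ, (∫ t in (1/4:ℝ)..1, f t) = q * Real.pi + r * Real.sqrt 3

lemma Nice.congr {f g : ℝ → ℝ} (hf : Nice f)
    (h : ∀ t ∈ Set.Icc (1/4:ℝ) 1, f t = g t) : Nice g := by
  have huIcc : Set.uIcc (1/4:ℝ) 1 = Set.Icc (1/4:ℝ) 1 := Set.uIcc_of_le (by norm_num)
  have hae : f =ᵐ[MeasureTheory.volume.restrict (Set.uIoc (1/4:ℝ) 1)] g := by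
    refine (MeasureTheory.ae_restrict_mem measurableSet_uIoc).mono (fun x hx => ?_)
    refine h x ?_
    rw [Set.uIoc_of_le (by norm_num : (1/4:ℝ) ≤ 1)] at hx
    exact Set.Ioc_subset_Icc_self hx
  refine ⟨hf.1.congr_ae hae, ?_⟩
  obtain ⟨q, r, hqr⟩ := hf.2
  refine ⟨q, r, ?_⟩
  have heq := intervalIntegral.integral_congr (μ := MeasureTheory.volume) (f := f) (g := g)
    (fun x hx => h x (huIcc ▸ hx))
  rw [← heq]
  exact hqr

lemma Nice.add {f g : ℝ → ℝ} (hf : Nice f) (hg : Nice g) : Nice (fun t => f t + g t) := by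
  obtain ⟨qf, rf, hf2⟩ := hf.2
  obtain ⟨qg, rg, hg2⟩ := hg.2
  refine ⟨hf.1.add hg.1, qf + qg, rf + rg, ?_⟩
  rw [intervalIntegral.integral_add hf.1 hg.1, hf2, hg2]
  push_cast
  ring

lemma Nice.neg {f : ℝ → ℝ} (hf : Nice f) : Nice (fun t => -f t) := by
  obtain ⟨qf, rf, hf2⟩ := hf.2
  refine ⟨hf.1.neg, -qf, -rf, ?_⟩
  rw [intervalIntegral.integral_neg, hf2]
  push_cast
  ring

lemma Nice.sub {f g : ℝ → ℝ} (hf : Nice f) (hg : Nice g) : Nice (fun t => f t - g t) := by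
  have := hf.add hg.neg
  simpa [sub_eq_add_neg] using this

lemma Nice.const_mul {f : ℝ → ℝ} (c : ℚ) (hf : Nice f) : Nice (fun t => (c:ℝ) * f t) := by
  obtain ⟨qf, rf, hf2⟩ := hf.2
  refine ⟨hf.1.const_mul _, c * qf, c * rf, ?_⟩
  rw [intervalIntegral.integral_const_mul, hf2]
  push_cast
  ring

lemma Nice.zero : Nice (fun _ : ℝ => 0) := by
  refine ⟨intervalIntegrable_const, 0, 0, ?_⟩
  simp

lemma Nice.sum {ι : Type*} (s : Finset ι) (F : ι → ℝ → ℝ) (h : ∀ i ∈ s, Nice (F i)) :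
    Nice (fun t => ∑ i ∈ s, F i t) := by
  classical
  induction s using Finset.cons_induction with
  | empty => simpa using Nice.zero
  | cons a s ha ih =>
    have h1 : Nice (F a) := h a (Finset.mem_cons_self a s)
    have h2 : Nice (fun t => ∑ i ∈ s, F i t) := ih (fun i hi => h i (Finset.mem_cons_of_mem hi))
    have := h1.add h2
    refine this.congr (fun t _ => ?_)
    rw [Finset.sum_cons]

lemma Nice_zpow (k : ℤ) : Nice (fun t : ℝ => t ^ k / Real.sqrt (4 * t - 1)) :=
  ⟨intInt k, II_mem k⟩

lemma Nice_poly (p : Polynomial ℚ) (k : ℤ) :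
    Nice (fun t : ℝ => (Polynomial.aeval t p : ℝ) * t ^ k / Real.sqrt (4 * t - 1)) := by
  induction p using Polynomial.induction_on' with
  | add p q hp hq =>
    refine (hp.add hq).congr (fun t _ => ?_)
    simp only [map_add]
    ring
  | monomial n a =>
    refine ((Nice_zpow ((n:ℤ) + k)).const_mul a).congr (fun t ht => ?_)
    have ht0 : t ≠ 0 := by
      have := ht.1; intro h; rw [h] at this; norm_num at this
    rw [Polynomial.aeval_monomial, eq_ratCast]
    have : t ^ ((n:ℤ) + k) = t ^ (n:ℤ) * t ^ k := zpow_add₀ ht0 _ _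
    rw [this, zpow_natCast]
    push_cast
    ring

noncomputable def PP (j : ℕ) : Polynomial ℚ := (1 - Polynomial.X) ^ (j - 1) * rp j

lemma nice_integrand (x y : ℕ) :
    Nice (fun t : ℝ => (1 / Real.sqrt (4 * t - 1)) *
      (t ^ y * ∑ j ∈ Finset.Icc 1 x, (x.choose j : ℝ) * (1 - t) ^ (j - 1) * ((uu t) ^ j).re
        - ∑ l ∈ Finset.range y, t ^ l)) := by
  have hG : Nice (fun t : ℝ =>
      (∑ j ∈ Finset.Icc 1 x, ((x.choose j : ℚ) : ℝ) *
        ((Polynomial.aeval t (PP j) : ℝ) * t ^ ((y:ℤ) - (j:ℤ)) / Real.sqrt (4 * t - 1)))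
      - ∑ l ∈ Finset.range y, t ^ (l:ℤ) / Real.sqrt (4 * t - 1)) := by
    refine Nice.sub (Nice.sum _ _ (fun j _ => ?_)) (Nice.sum _ _ (fun l _ => ?_))
    · exact (Nice_poly (PP j) ((y:ℤ) - (j:ℤ))).const_mul _
    · exact Nice_zpow (l:ℤ)
  refine hG.congr (fun t ht => ?_)
  have ht0 : t ≠ 0 := by
    have := ht.1; intro h; rw [h] at this; norm_num at this
  have ht4 : 0 ≤ 4 * t - 1 := by have := ht.1; linarith
  set s := Real.sqrt (4 * t - 1) with hs
  have hA : ∑ j ∈ Finset.Icc 1 x, ((x.choose j : ℚ) : ℝ) *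
        ((Polynomial.aeval t (PP j) : ℝ) * t ^ ((y:ℤ) - (j:ℤ)) / s)
      = (1 / s) * (t ^ y * ∑ j ∈ Finset.Icc 1 x,
        (x.choose j : ℝ) * (1 - t) ^ (j - 1) * ((uu t) ^ j).re) := by
    rw [Finset.mul_sum, Finset.mul_sum]
    refine Finset.sum_congr rfl (fun j hj => ?_)
    rw [uu_pow_re t ht0 ht4 j]
    have hzp : t ^ ((y:ℤ) - (j:ℤ)) = t ^ y / t ^ j := by
      rw [zpow_sub₀ ht0, zpow_natCast, zpow_natCast]
    rw [hzp, PP, map_mul, map_pow, map_sub, map_one, Polynomial.aeval_X]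
    push_cast
    ring
  have hB : ∑ l ∈ Finset.range y, t ^ (l:ℤ) / s
      = (1 / s) * ∑ l ∈ Finset.range y, t ^ l := by
    rw [Finset.mul_sum]
    refine Finset.sum_congr rfl (fun l _ => ?_)
    rw [zpow_natCast]
    ring
  rw [hA, hB, mul_sub]

/-- Every value `𝒢(x,y)` lies in `ℚ(√3, π)`: there are rationals `a`, `b` with
`𝒢(x,y) = a + b·(√3/π)`. -/
theorem calG_mem_Q_sqrt3_pi (x y : ℕ) :
    ∃ a b : ℚ, calG x y = (a : ℝ) + (b : ℝ) * (Real.sqrt 3 / Real.pi) := by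
  obtain ⟨q, r, h⟩ := (nice_integrand x y).2
  refine ⟨3*q, 3*r, ?_⟩
  rw [calG, h]
  have hπ : Real.pi ≠ 0 := Real.pi_ne_zero
  push_cast
  field_simp
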